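/- Suppose E₁ : [0,∞) → [0,∞) is a nonnegative bounded measurable function, positive on a set of positive measure, and u ∈ L¹(0,∞) is nonnegative, such that E₁(t) ≥ K ∫₀^t u(τ)E₁(t−τ)dτ for all t ≥ 0, where K > 0. Then, for every λ > 0, K ∫₀^∞ u(τ)e^{−λτ}dτ ≤ 1, and letting λ → 0⁺, K ∫₀^∞ u(τ)dτ ≤ 1. -/

import Mathlib

open MeasureTheory Set Real

lemma renewal_laplace_bound_aux
    (E₁ u : ℝ → ℝ) (K : ℝ) (hK : 0 < K)
    (hE₁m : Measurable E₁) (hE₁0 : ∀ t, 0 ≤ E₁ t)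
    (M : ℝ) (hE₁b : ∀ t, E₁ t ≤ M)
    (hE₁pos : 0 < (volume.restrict (Ioi (0:ℝ))) {t | 0 < E₁ t})
    (hu0 : ∀ τ, 0 ≤ u τ) (huint : IntegrableOn u (Ioi 0))
    (hrenewal : ∀ t, 0 ≤ t → K * (∫ τ in (0:ℝ)..t, u τ * E₁ (t - τ)) ≤ E₁ t)
    (l : ℝ) (hl : 0 < l) :
    K * (∫ τ in Ioi (0:ℝ), u τ * Real.exp (-l * τ)) ≤ 1 := by
  set g : ℝ → ℝ := fun τ => u τ * Real.exp (-l * τ) with hg_def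
  set h : ℝ → ℝ := fun s => E₁ s * Real.exp (-l * s) with hh_def
  have hexp_m : Measurable fun s : ℝ => Real.exp (-l * s) :=
    (measurable_const.mul measurable_id).exp
  have hg_int : IntegrableOn g (Ioi 0) := by
    refine huint.mono' (huint.aestronglyMeasurable.mul hexp_m.aestronglyMeasurable) ?_
    filter_upwards [ae_restrict_mem measurableSet_Ioi] with τ hτ
    have h1 : Real.exp (-l * τ) ≤ 1 := by
      rw [Real.exp_le_one_iff]
      nlinarith [le_of_lt (mem_Ioi.mp hτ)]
    have h2 : 0 < Real.exp (-l * τ) := Real.exp_pos _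
    rw [Real.norm_eq_abs, abs_of_nonneg (mul_nonneg (hu0 τ) h2.le)]
    nlinarith [hu0 τ]
  have hh_int : IntegrableOn h (Ioi 0) := by
    refine ((exp_neg_integrableOn_Ioi 0 hl).const_mul M).mono'
      ((hE₁m.mul hexp_m).aestronglyMeasurable) ?_
    refine Filter.Eventually.of_forall fun s => ?_
    have h2 : 0 < Real.exp (-l * s) := Real.exp_pos _
    rw [Real.norm_eq_abs, abs_of_nonneg (mul_nonneg (hE₁0 s) h2.le)]
    exact mul_le_mul_of_nonneg_right (hE₁b s) h2.le
  set A : ℝ := ∫ s in Ioi (0:ℝ), h s with hA_def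
  have hA_pos : 0 < A := by
    rw [hA_def, integral_pos_iff_support_of_nonneg_ae
      (Filter.Eventually.of_forall fun s => mul_nonneg (hE₁0 s) (Real.exp_pos _).le) hh_int]
    refine lt_of_lt_of_le hE₁pos (measure_mono ?_)
    intro t ht
    have ht' : 0 < E₁ t := ht
    simp only [Function.mem_support, hh_def]
    positivity
  -- the convolution identity
  have key := integral_posConvolution (μ := volume) (ν := volume) hg_int hh_int
    (ContinuousLinearMap.mul ℝ ℝ)
  simp only [ContinuousLinearMap.mul_apply'] at key
  -- integrability of the convolution
  have hconv_int : IntegrableOn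
      (fun x => ∫ t in (0:ℝ)..x, g t * h (x - t)) (Ioi 0) := by
    have := integrable_posConvolution (μ := volume) (ν := volume) hg_int hh_int
      (ContinuousLinearMap.mul ℝ ℝ)
    refine (this.integrableOn (s := Ioi 0)).congr_fun ?_ measurableSet_Ioi
    intro x hx
    simp [posConvolution, indicator_of_mem hx]
  -- pointwise inequality on Ioi 0
  have hpt : ∀ x ∈ Ioi (0:ℝ),
      K * ∫ t in (0:ℝ)..x, g t * h (x - t) ≤ h x := by
    intro x hx
    have hx0 : (0:ℝ) < x := hx
    have hconv_eq : (∫ t in (0:ℝ)..x, g t * h (x - t))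
        = Real.exp (-l * x) * ∫ t in (0:ℝ)..x, u t * E₁ (x - t) := by
      rw [← intervalIntegral.integral_const_mul]
      refine intervalIntegral.integral_congr fun t _ => ?_
      simp only [hg_def, hh_def]
      have he : Real.exp (-l * t) * Real.exp (-l * (x - t)) = Real.exp (-l * x) := by
        rw [← Real.exp_add]; ring_nf
      calc u t * Real.exp (-l * t) * (E₁ (x - t) * Real.exp (-l * (x - t)))
          = Real.exp (-l * t) * Real.exp (-l * (x - t)) * (u t * E₁ (x - t)) := by ring
        _ = Real.exp (-l * x) * (u t * E₁ (x - t)) := by rw [he]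
    rw [hconv_eq, hh_def]
    have := hrenewal x hx0.le
    have he : 0 < Real.exp (-l * x) := Real.exp_pos _
    calc K * (Real.exp (-l * x) * ∫ t in (0:ℝ)..x, u t * E₁ (x - t))
        = Real.exp (-l * x) * (K * ∫ t in (0:ℝ)..x, u t * E₁ (x - t)) := by ring
      _ ≤ Real.exp (-l * x) * E₁ x := by
          exact mul_le_mul_of_nonneg_left this he.le
      _ = E₁ x * Real.exp (-l * x) := by ring
  have hineq : ∫ x in Ioi (0:ℝ), K * ∫ t in (0:ℝ)..x, g t * h (x - t)
      ≤ ∫ x in Ioi (0:ℝ), h x := by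
    refine setIntegral_mono_on (hconv_int.const_mul K) hh_int measurableSet_Ioi hpt
  rw [integral_const_mul, key] at hineq
  -- hineq : K * ((∫ g) * A) ≤ A
  have : K * (∫ τ in Ioi (0:ℝ), g τ) * A ≤ 1 * A := by
    rw [one_mul]; linarith [hineq]
  exact le_of_mul_le_mul_right this hA_pos

theorem renewal_laplace_bound
    (E₁ u : ℝ → ℝ) (K : ℝ) (hK : 0 < K)
    (hE₁m : Measurable E₁) (hE₁0 : ∀ t, 0 ≤ E₁ t)
    (M : ℝ) (hE₁b : ∀ t, E₁ t ≤ M)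
    (hE₁pos : 0 < (volume.restrict (Ioi (0:ℝ))) {t | 0 < E₁ t})
    (hu0 : ∀ τ, 0 ≤ u τ) (huint : IntegrableOn u (Ioi 0))
    (hrenewal : ∀ t, 0 ≤ t → K * (∫ τ in (0:ℝ)..t, u τ * E₁ (t - τ)) ≤ E₁ t) :
    (∀ l : ℝ, 0 < l → K * (∫ τ in Ioi (0:ℝ), u τ * Real.exp (-l * τ)) ≤ 1) ∧
    K * (∫ τ in Ioi (0:ℝ), u τ) ≤ 1 := by
  have main := renewal_laplace_bound_aux E₁ u K hK hE₁m hE₁0 M hE₁b hE₁pos hu0 huint hrenewal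
  refine ⟨main, ?_⟩
  -- limit l → 0⁺ along the sequence 1/(n+1)
  set φ : ℕ → ℝ → ℝ := fun n τ => u τ * Real.exp (-(1/(n+1 : ℝ)) * τ) with hφ_def
  have hln : ∀ n : ℕ, (0:ℝ) < 1/(n+1 : ℝ) := fun n => by positivity
  have hn_le : ∀ n, K * (∫ τ in Ioi (0:ℝ), φ n τ) ≤ 1 := fun n => main _ (hln n)
  have htend : Filter.Tendsto (fun n => ∫ τ in Ioi (0:ℝ), φ n τ)
      Filter.atTop (nhds (∫ τ in Ioi (0:ℝ), u τ)) := by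
    refine tendsto_integral_of_dominated_convergence u ?_ huint ?_ ?_
    · intro n
      exact huint.aestronglyMeasurable.mul
        ((measurable_const.mul measurable_id).exp).aestronglyMeasurable
    · intro n
      filter_upwards [ae_restrict_mem measurableSet_Ioi] with τ hτ
      have h1 : Real.exp (-(1/(n+1 : ℝ)) * τ) ≤ 1 := by
        rw [Real.exp_le_one_iff]
        have := le_of_lt (mem_Ioi.mp hτ)
        nlinarith [hln n]
      have h2 : 0 < Real.exp (-(1/(n+1 : ℝ)) * τ) := Real.exp_pos _
      rw [Real.norm_eq_abs, abs_of_nonneg (mul_nonneg (hu0 τ) h2.le)]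
      nlinarith [hu0 τ]
    · refine Filter.Eventually.of_forall fun τ => ?_
      have h1 : Filter.Tendsto (fun n : ℕ => -(1/(n+1 : ℝ)) * τ)
          Filter.atTop (nhds 0) := by
        have : Filter.Tendsto (fun n : ℕ => 1 / ((n : ℝ) + 1)) Filter.atTop (nhds 0) :=
          tendsto_one_div_add_atTop_nhds_zero_nat
        have h2 := (this.neg).mul_const τ
        simpa using h2
      have := (Real.continuous_exp.tendsto 0).comp h1
      rw [Real.exp_zero] at this
      simpa [hφ_def] using (tendsto_const_nhds (x := u τ)).mul this
  have := htend.const_mul K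
  exact le_of_tendsto this (Filter.Eventually.of_forall hn_le)
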